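/- Let H₀, H₁, H₂ be complex Hilbert spaces; let i₁ : H₀ → H₁, i₂ : H₀ → H₂ and p₁ : H₁ → H₀ be bounded linear maps with p₁∘i₁ = id on H₀; let J be a bounded self-adjoint operator on H₀; set J₁ = i₁∘J∘p₁ and let J₁' be a bounded self-adjoint operator on H₁ such that J₁ is self-adjoint, 0 ≤ Re⟨J₁u,u⟩ ≤ ‖u‖² for all u, and J₁∘J₁ + J₁'∘J₁' = 1. Let A₁, A₂ be bounded self-adjoint operators on H₁, H₂ respectively and let real constants λ₀₁ ≤ 0, λ₀₂ ≤ 0, λ₁, λ₂, γ₁ ≥ 0, α₁ > 0, β₁ ≥ 1, ε₁ > 0, ρ > 1 satisfy: (i) Re⟨A₁u,u⟩ ≥ λ₀₁‖u‖² for all u ∈ H₁ and Re⟨A₂v,v⟩ ≥ λ₀₂‖v‖² for all v ∈ H₂; (ii) ‖[J₁,[J₁,A₁]]‖ ≤ γ₁ and ‖[J₁',[J₁',A₁]]‖ ≤ γ₁; (iii) Re⟨A₁(J₁'u),J₁'u⟩ ≥ α₁‖J₁'u‖² for all u ∈ H₁; (iv) ρ⁻¹‖i₂(Ju)‖² ≤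 ‖i₁(Ju)‖² ≤ ρ‖i₂(Ju)‖² for all u ∈ H₀; (v) Re⟨A₂(i₂(Ju)),i₂(Ju)⟩ ≤ β₁·Re⟨A₁(i₁(Ju)),i₁(Ju)⟩ + ε₁‖i₁(Ju)‖² for all u ∈ H₀. Let E₁ be an orthogonal projection on H₁ with Re⟨A₁(E₁u),E₁u⟩ ≤ λ₁‖E₁u‖² for all u ∈ H₁, and let E₂ be an orthogonal projection on H₂ commuting with A₂ such that Re⟨A₂((1−E₂)v),(1−E₂)v⟩ ≥ λ₂‖(1−E₂)v‖² for all v ∈ H₂. Assume α₁ > λ₁ + γ₁, λ₂ > λ₀₂ and λ₂ ≥ ρ·ε₁. Then for every u ∈ H₁ one has ‖E₂(i₂(J(p₁(E₁u))))‖² ≥ ε₀·‖E₁u‖², where ε₀ = (λ₂−λ₀₂)⁻¹·[ (λ₂ρ⁻¹−ε₁)·(α₁−λ₁−γ₁)/(α₁−λ₀₁) − β₁·(λ₁+γ₁ − λ₀₁·(λ₁+γ₁−λ₀₁)/(α₁−λ₀₁)) ]. Moreover, if λ₂ > ρ·[β₁·(λ₁+γ₁+(λ₁+γ₁−λ₀₁)²/(α₁−λ₁−γ₁))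 + ε₁], then ε₀ > 0. -/

import Mathlib

set_option maxHeartbeats 1000000 in


/-- **Closed-image estimate for spectral projections** (abstract form of
Proposition `p:closedimage`). Under the quantitative assumptions (i)–(v) relating the
operators `A₁` on `H₁` and `A₂` on `H₂` through the cut-off `J` on `H₀` and the maps
`i₁, i₂, p₁`, for the spectral-type projections `E₁` and `E₂` one has
`‖E₂(i₂(J(p₁(E₁ u))))‖² ≥ ε₀ ‖E₁ u‖²` with the explicit constant `ε₀`; moreover `ε₀ > 0`
provided `λ₂` exceeds the explicit threshold. -/
theorem closed_image_estimate {H₀ H₁ H₂ : Type*}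
    [NormedAddCommGroup H₀] [InnerProductSpace ℂ H₀] [CompleteSpace H₀]
    [NormedAddCommGroup H₁] [InnerProductSpace ℂ H₁] [CompleteSpace H₁]
    [NormedAddCommGroup H₂] [InnerProductSpace ℂ H₂] [CompleteSpace H₂]
    (i₁ : H₀ →L[ℂ] H₁) (i₂ : H₀ →L[ℂ] H₂) (p₁ : H₁ →L[ℂ] H₀)
    (hp₁i₁ : p₁.comp i₁ = ContinuousLinearMap.id ℂ H₀)
    (J : H₀ →L[ℂ] H₀) (hJsa : IsSelfAdjoint J)
    (J₁ J₁' : H₁ →L[ℂ] H₁)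
    (hJ₁def : J₁ = i₁.comp (J.comp p₁))
    (hJ₁sa : IsSelfAdjoint J₁) (hJ₁'sa : IsSelfAdjoint J₁')
    (hJ₁0 : ∀ u : H₁, 0 ≤ (inner ℂ (J₁ u) u : ℂ).re)
    (hJ₁1 : ∀ u : H₁, (inner ℂ (J₁ u) u : ℂ).re ≤ ‖u‖ ^ 2)
    (hJ₁sum : J₁ * J₁ + J₁' * J₁' = 1)
    (A₁ : H₁ →L[ℂ] H₁) (A₂ : H₂ →L[ℂ] H₂)
    (hA₁sa : IsSelfAdjoint A₁) (hA₂sa : IsSelfAdjoint A₂)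
    (lam₀₁ lam₀₂ lam₁ lam₂ γ₁ α₁ β₁ ε₁ ρ : ℝ)
    (hlam₀₁ : lam₀₁ ≤ 0) (hlam₀₂ : lam₀₂ ≤ 0) (hγ₁ : 0 ≤ γ₁) (hα₁ : 0 < α₁)
    (hβ₁ : 1 ≤ β₁) (hε₁ : 0 < ε₁) (hρ : 1 < ρ)
    -- (i) lower bounds for `A₁` and `A₂`
    (hA₁low : ∀ u : H₁, lam₀₁ * ‖u‖ ^ 2 ≤ (inner ℂ (A₁ u) u : ℂ).re)
    (hA₂low : ∀ v : H₂, lam₀₂ * ‖v‖ ^ 2 ≤ (inner ℂ (A₂ v) v : ℂ).re)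
    -- (ii) double commutator bounds
    (hcomm : ‖⁅J₁, ⁅J₁, A₁⁆⁆‖ ≤ γ₁) (hcomm' : ‖⁅J₁', ⁅J₁', A₁⁆⁆‖ ≤ γ₁)
    -- (iii) positivity of `A₁` outside the support of the cut-off
    (hAJ₁' : ∀ u : H₁, α₁ * ‖J₁' u‖ ^ 2 ≤ (inner ℂ (A₁ (J₁' u)) (J₁' u) : ℂ).re)
    -- (iv) comparison of norms
    (hρcomp : ∀ u : H₀, ρ⁻¹ * ‖i₂ (J u)‖ ^ 2 ≤ ‖i₁ (J u)‖ ^ 2 ∧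
        ‖i₁ (J u)‖ ^ 2 ≤ ρ * ‖i₂ (J u)‖ ^ 2)
    -- (v) comparison of quadratic forms
    (hforms : ∀ u : H₀, (inner ℂ (A₂ (i₂ (J u))) (i₂ (J u)) : ℂ).re ≤
        β₁ * (inner ℂ (A₁ (i₁ (J u))) (i₁ (J u)) : ℂ).re + ε₁ * ‖i₁ (J u)‖ ^ 2)
    (E₁ : H₁ →L[ℂ] H₁) (hE₁proj : E₁ * E₁ = E₁) (hE₁sa : IsSelfAdjoint E₁)
    (hE₁bound : ∀ u : H₁, (inner ℂ (A₁ (E₁ u)) (E₁ u) : ℂ).re ≤ lam₁ * ‖E₁ u‖ ^ 2)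
    (E₂ : H₂ →L[ℂ] H₂) (hE₂proj : E₂ * E₂ = E₂) (hE₂sa : IsSelfAdjoint E₂)
    (hE₂comm : E₂ * A₂ = A₂ * E₂)
    (hE₂bound : ∀ v : H₂, lam₂ * ‖(1 - E₂) v‖ ^ 2 ≤
        (inner ℂ (A₂ ((1 - E₂) v)) ((1 - E₂) v) : ℂ).re)
    (hgap₁ : α₁ > lam₁ + γ₁) (hlam₂low : lam₂ > lam₀₂) (hlam₂ε : lam₂ ≥ ρ * ε₁)
    (ε₀ : ℝ)
    (hε₀def : ε₀ = (lam₂ - lam₀₂)⁻¹ *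
        ((lam₂ * ρ⁻¹ - ε₁) * ((α₁ - lam₁ - γ₁) / (α₁ - lam₀₁))
          - β₁ * (lam₁ + γ₁ - lam₀₁ * ((lam₁ + γ₁ - lam₀₁) / (α₁ - lam₀₁))))) :
    (∀ u : H₁, ε₀ * ‖E₁ u‖ ^ 2 ≤ ‖E₂ (i₂ (J (p₁ (E₁ u))))‖ ^ 2) ∧
      (lam₂ > ρ * (β₁ * (lam₁ + γ₁ + (lam₁ + γ₁ - lam₀₁) ^ 2 / (α₁ - lam₁ - γ₁)) + ε₁) →
        0 < ε₀) := by
  have hρ0 : (0:ℝ) < ρ := by linarith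
  have hd1 : (0:ℝ) < α₁ - lam₀₁ := by linarith
  have hd2 : (0:ℝ) < lam₂ - lam₀₂ := by linarith
  have hd : (0:ℝ) < α₁ - lam₁ - γ₁ := by linarith
  have hβ₀ : (0:ℝ) ≤ β₁ := by linarith
  obtain ⟨c, hc⟩ : ∃ c : ℝ, c = (α₁ - lam₁ - γ₁) / (α₁ - lam₀₁) := ⟨_, rfl⟩
  have hε₀' : ε₀ * (lam₂ - lam₀₂) =
      (lam₂ * ρ⁻¹ - ε₁) * (c)
        - β₁ * (lam₁ + γ₁ - lam₀₁ * (1 - c)) := by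
    rw [hε₀def, hc]
    field_simp
    ring
  have hX : (0:ℝ) ≤ lam₂ * ρ⁻¹ - ε₁ := by
    have : ε₁ ≤ lam₂ / ρ := (le_div_iff₀ hρ0).2 (by linarith)
    rw [div_eq_mul_inv] at this
    linarith
  have hlam₂0 : (0:ℝ) ≤ lam₂ := by nlinarith
  constructor
  · intro u
    set v := E₁ u with hv
    by_cases hv0 : v = 0
    · simp [hv0]
    have ha0 : (0:ℝ) < ‖v‖ ^ 2 := by
      have := norm_pos_iff.2 hv0
      positivity
    -- symmetry facts
    have sJ : ∀ x y : H₁, (inner ℂ (J₁ x) y : ℂ) = inner ℂ x (J₁ y) :=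
      fun x y => hJ₁sa.isSymmetric x y
    have sJ' : ∀ x y : H₁, (inner ℂ (J₁' x) y : ℂ) = inner ℂ x (J₁' y) :=
      fun x y => hJ₁'sa.isSymmetric x y
    have sA₂ : ∀ x y : H₂, (inner ℂ (A₂ x) y : ℂ) = inner ℂ x (A₂ y) :=
      fun x y => hA₂sa.isSymmetric x y
    have sE₂ : ∀ x y : H₂, (inner ℂ (E₂ x) y : ℂ) = inner ℂ x (E₂ y) :=
      fun x y => hE₂sa.isSymmetric x y
    have nsq1 : ∀ x : H₁, (inner ℂ x x : ℂ).re = ‖x‖ ^ 2 :=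
      fun x => @inner_self_eq_norm_sq ℂ H₁ _ _ _ x
    -- norm splitting on H₁
    have hnorm1 : ‖J₁ v‖ ^ 2 + ‖J₁' v‖ ^ 2 = ‖v‖ ^ 2 := by
      have h := congrArg (fun T : H₁ →L[ℂ] H₁ => (inner ℂ (T v) v : ℂ).re) hJ₁sum
      simp only [ContinuousLinearMap.add_apply, ContinuousLinearMap.mul_apply,
        ContinuousLinearMap.one_apply, inner_add_left, Complex.add_re] at h
      rw [sJ (J₁ v) v, sJ' (J₁' v) v, nsq1 (J₁ v), nsq1 (J₁' v), nsq1 v] at h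
      exact h
    -- IMS localization identity
    have hIMSop : J₁ * A₁ * J₁ + J₁' * A₁ * J₁' + (J₁ * A₁ * J₁ + J₁' * A₁ * J₁')
        + (⁅J₁, ⁅J₁, A₁⁆⁆ + ⁅J₁', ⁅J₁', A₁⁆⁆) = A₁ + A₁ := by
      simp only [Ring.lie_def]
      have h : J₁ * A₁ * J₁ + J₁' * A₁ * J₁' + (J₁ * A₁ * J₁ + J₁' * A₁ * J₁')
          + ((J₁ * (J₁ * A₁ - A₁ * J₁) - (J₁ * A₁ - A₁ * J₁) * J₁)
            + (J₁' * (J₁' * A₁ - A₁ * J₁') - (J₁' * A₁ - A₁ * J₁') * J₁'))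
          = A₁ * (J₁ * J₁ + J₁' * J₁') + (J₁ * J₁ + J₁' * J₁') * A₁ := by noncomm_ring
      rw [h, hJ₁sum, mul_one, one_mul]
    -- commutator remainder bound
    have hbnd : ∀ C : H₁ →L[ℂ] H₁, ‖C‖ ≤ γ₁ → -(γ₁ * ‖v‖ ^ 2) ≤ (inner ℂ (C v) v : ℂ).re := by
      intro C hC
      have h1 : ‖(inner ℂ (C v) v : ℂ)‖ ≤ γ₁ * ‖v‖ ^ 2 := by
        calc ‖(inner ℂ (C v) v : ℂ)‖ ≤ ‖C v‖ * ‖v‖ := norm_inner_le_norm _ _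
          _ ≤ (‖C‖ * ‖v‖) * ‖v‖ := by gcongr; exact ContinuousLinearMap.le_opNorm _ _
          _ ≤ (γ₁ * ‖v‖) * ‖v‖ := by gcongr
          _ = γ₁ * ‖v‖ ^ 2 := by ring
      have h2 := neg_abs_le ((inner ℂ (C v) v : ℂ)).re
      have h3 := Complex.abs_re_le_norm ((inner ℂ (C v) v : ℂ))
      linarith
    have hR1 := hbnd _ hcomm
    have hR2 := hbnd _ hcomm'
    -- IMS inequality applied at v
    have hIMS : (inner ℂ (A₁ (J₁ v)) (J₁ v) : ℂ).re + (inner ℂ (A₁ (J₁' v)) (J₁' v) : ℂ).re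
        ≤ (lam₁ + γ₁) * ‖v‖ ^ 2 := by
      have h := congrArg (fun T : H₁ →L[ℂ] H₁ => (inner ℂ (T v) v : ℂ).re) hIMSop
      simp only [ContinuousLinearMap.add_apply, ContinuousLinearMap.mul_apply,
        inner_add_left, Complex.add_re] at h
      rw [sJ (A₁ (J₁ v)) v, sJ' (A₁ (J₁' v)) v] at h
      have hq1v : (inner ℂ (A₁ v) v : ℂ).re ≤ lam₁ * ‖v‖ ^ 2 := hE₁bound u
      linarith
    -- lower bounds for the two localized pieces
    have hlowJ : lam₀₁ * ‖J₁ v‖ ^ 2 ≤ (inner ℂ (A₁ (J₁ v)) (J₁ v) : ℂ).re := hA₁low (J₁ v)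
    have hlowJ' : α₁ * ‖J₁' v‖ ^ 2 ≤ (inner ℂ (A₁ (J₁' v)) (J₁' v) : ℂ).re := hAJ₁' v
    have hlowJ'2 : lam₀₁ * ‖J₁' v‖ ^ 2 ≤ (inner ℂ (A₁ (J₁' v)) (J₁' v) : ℂ).re := hA₁low (J₁' v)
    have hnα : α₁ * ‖J₁ v‖ ^ 2 + α₁ * ‖J₁' v‖ ^ 2 = α₁ * ‖v‖ ^ 2 := by
      rw [← hnorm1]; ring
    have hnlam : lam₀₁ * ‖J₁ v‖ ^ 2 + lam₀₁ * ‖J₁' v‖ ^ 2 = lam₀₁ * ‖v‖ ^ 2 := by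
      rw [← hnorm1]; ring
    -- key lower bound for ‖J₁ v‖²
    have hb : c * ‖v‖ ^ 2 ≤ ‖J₁ v‖ ^ 2 := by
      rw [hc, div_mul_eq_mul_div, div_le_iff₀ hd1]
      nlinarith [hIMS, hlowJ, hlowJ', hnα]
    -- upper bound for the quadratic form at J₁ v
    have hq_up : (inner ℂ (A₁ (J₁ v)) (J₁ v) : ℂ).re
        ≤ (lam₁ + γ₁ - lam₀₁ * (1 - c)) * ‖v‖ ^ 2 := by
      have hkey : (-lam₀₁) * (‖v‖ ^ 2 - ‖J₁ v‖ ^ 2)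
          ≤ (-lam₀₁) * ((1 - c) * ‖v‖ ^ 2) := by
        apply mul_le_mul_of_nonneg_left _ (by linarith)
        nlinarith [hb]
      nlinarith [hIMS, hlowJ'2, hkey, hnlam, hnorm1]
    -- identify J₁ v with i₁ (J (p₁ v))
    have hJ₁v : J₁ v = i₁ (J (p₁ v)) := by rw [hJ₁def]; rfl
    -- H₂ side
    set w := i₂ (J (p₁ v)) with hw
    set e := E₂ w with he
    set f := (1 - E₂) w with hf
    have hEf : E₂ f = 0 := by
      have h := congrArg (fun T : H₂ →L[ℂ] H₂ => T w) hE₂proj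
      simp only [ContinuousLinearMap.mul_apply] at h
      simp only [hf, ContinuousLinearMap.sub_apply, ContinuousLinearMap.one_apply, map_sub, h]
      simp
    have hef : e + f = w := by
      simp only [he, hf, ContinuousLinearMap.sub_apply, ContinuousLinearMap.one_apply]
      abel
    have hA₂e : A₂ e = E₂ (A₂ w) := by
      have h := congrArg (fun T : H₂ →L[ℂ] H₂ => T w) hE₂comm
      simp only [ContinuousLinearMap.mul_apply] at h
      rw [he, ← h]
    have hcross1 : (inner ℂ (A₂ e) f : ℂ) = 0 := by
      rw [hA₂e, sE₂ (A₂ w) f, hEf, inner_zero_right]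
    have hcross2 : (inner ℂ (A₂ f) e : ℂ) = 0 := by
      rw [sA₂ f e, hA₂e, ← sE₂ f (A₂ w), hEf, inner_zero_left]
    have hqsplit : (inner ℂ (A₂ w) w : ℂ).re
        = (inner ℂ (A₂ e) e : ℂ).re + (inner ℂ (A₂ f) f : ℂ).re := by
      conv_lhs => rw [← hef]
      rw [map_add, inner_add_left, inner_add_right, inner_add_right, hcross1, hcross2]
      simp
    have hnsplit : ‖w‖ ^ 2 = ‖e‖ ^ 2 + ‖f‖ ^ 2 := by
      have hef0 : (inner ℂ e f : ℂ) = 0 := by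
        rw [he, sE₂ w f, hEf, inner_zero_right]
      rw [← hef, @norm_add_sq ℂ _ _ _ _ e f, hef0]
      simp
    have hqe : lam₀₂ * ‖e‖ ^ 2 ≤ (inner ℂ (A₂ e) e : ℂ).re := hA₂low e
    have hqf : lam₂ * ‖f‖ ^ 2 ≤ (inner ℂ (A₂ f) f : ℂ).re := hE₂bound w
    have hcompw : ‖J₁ v‖ ^ 2 ≤ ρ * ‖w‖ ^ 2 := by
      rw [hJ₁v]; exact (hρcomp (p₁ v)).2
    have hformw : (inner ℂ (A₂ w) w : ℂ).re
        ≤ β₁ * (inner ℂ (A₁ (J₁ v)) (J₁ v) : ℂ).re + ε₁ * ‖J₁ v‖ ^ 2 := by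
      rw [hJ₁v]; exact hforms (p₁ v)
    -- chain of scalar inequalities
    have hw2 : ρ⁻¹ * ‖J₁ v‖ ^ 2 ≤ ‖w‖ ^ 2 := by
      rw [← div_eq_inv_mul, div_le_iff₀ hρ0]
      linarith [hcompw]
    have hnsplit' : lam₂ * ‖w‖ ^ 2 = lam₂ * ‖e‖ ^ 2 + lam₂ * ‖f‖ ^ 2 := by
      rw [hnsplit]; ring
    have step1 : lam₂ * ‖w‖ ^ 2 - (inner ℂ (A₂ w) w : ℂ).re ≤ (lam₂ - lam₀₂) * ‖e‖ ^ 2 := by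
      linarith [hqe, hqf, hqsplit, hnsplit']
    have h1 : lam₂ * (ρ⁻¹ * ‖J₁ v‖ ^ 2) ≤ lam₂ * ‖w‖ ^ 2 :=
      mul_le_mul_of_nonneg_left hw2 hlam₂0
    have step2 : (lam₂ * ρ⁻¹ - ε₁) * ‖J₁ v‖ ^ 2 - β₁ * (inner ℂ (A₁ (J₁ v)) (J₁ v) : ℂ).re
        ≤ (lam₂ - lam₀₂) * ‖e‖ ^ 2 := by
      linarith [step1, hformw, h1]
    have h2 : (lam₂ * ρ⁻¹ - ε₁) * (c * ‖v‖ ^ 2)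
        ≤ (lam₂ * ρ⁻¹ - ε₁) * ‖J₁ v‖ ^ 2 := mul_le_mul_of_nonneg_left hb hX
    have h3 : β₁ * (inner ℂ (A₁ (J₁ v)) (J₁ v) : ℂ).re
        ≤ β₁ * ((lam₁ + γ₁ - lam₀₁ * (1 - c)) * ‖v‖ ^ 2) :=
      mul_le_mul_of_nonneg_left hq_up hβ₀
    have h4 := congrArg (· * ‖v‖ ^ 2) hε₀'
    have step3 : (lam₂ - lam₀₂) * (ε₀ * ‖v‖ ^ 2) ≤ (lam₂ - lam₀₂) * ‖e‖ ^ 2 := by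
      linarith [step2, h2, h3, h4]
    exact le_of_mul_le_mul_left step3 hd2
  · intro hthr
    have hK : β₁ * (lam₁ + γ₁ + (lam₁ + γ₁ - lam₀₁) ^ 2 / (α₁ - lam₁ - γ₁)) + ε₁
        < lam₂ * ρ⁻¹ := by
      rw [← div_eq_mul_inv, lt_div_iff₀ hρ0]
      nlinarith [hthr]
    have hiden0 : lam₁ + γ₁ - lam₀₁ * (1 - c)
        = (lam₁ + γ₁ + (lam₁ + γ₁ - lam₀₁) ^ 2 / (α₁ - lam₁ - γ₁)) * c := by
      rw [hc]
      field_simp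
      ring
    have hiden : β₁ * (lam₁ + γ₁ - lam₀₁ * (1 - c))
        = β₁ * (lam₁ + γ₁ + (lam₁ + γ₁ - lam₀₁) ^ 2 / (α₁ - lam₁ - γ₁))
          * (c) := by
      rw [hiden0]; ring
    have hcpos : (0:ℝ) < c := hc ▸ div_pos hd hd1
    have hpos : 0 < ε₀ * (lam₂ - lam₀₂) := by
      rw [hε₀', hiden]
      have h5 : (β₁ * (lam₁ + γ₁ + (lam₁ + γ₁ - lam₀₁) ^ 2 / (α₁ - lam₁ - γ₁)))
          * (c)
          < (lam₂ * ρ⁻¹ - ε₁) * (c) := by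
        apply mul_lt_mul_of_pos_right _ hcpos
        linarith
      linarith
    by_contra hcon
    push_neg at hcon
    nlinarith [hpos, hd2, mul_nonneg (neg_nonneg.2 hcon) hd2.le]
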